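/- Let G be a finitely generated group whose word problem WP(G) is not recursively enumerable (i.e. G is not recursively presented). Then there exists a finite alphabet A and a (G×ℤ)-effectively closed subshift X ⊆ A^{G×ℤ} such that its ℤ-projective subdynamics π_ℤ(X) ⊆ A^ℤ is not an effectively closed ℤ-subshift. -/

import Mathlib

open scoped Classical

noncomputable section

namespace SDG

/-! ### Relativized computability -/

/-- Partial recursive functions `ℕ →. ℕ` relative to an oracle `O`. -/
inductive NatPartrecIn (O : ℕ →. ℕ) : (ℕ →. ℕ) → Prop
  | oracle : NatPartrecIn O O
  | zero : NatPartrecIn O (pure 0)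
  | succ : NatPartrecIn O Nat.succ
  | left : NatPartrecIn O ↑fun n : ℕ => n.unpair.1
  | right : NatPartrecIn O ↑fun n : ℕ => n.unpair.2
  | pair {f g} : NatPartrecIn O f → NatPartrecIn O g →
      NatPartrecIn O fun n => Nat.pair <$> f n <*> g n
  | comp {f g} : NatPartrecIn O f → NatPartrecIn O g →
      NatPartrecIn O fun n => g n >>= f
  | prec {f g} : NatPartrecIn O f → NatPartrecIn O g →
      NatPartrecIn O (Nat.unpaired fun a n =>
        n.rec (f a) fun y IH => do let i ← IH; g (Nat.pair a (Nat.pair y i)))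
  | rfind {f} : NatPartrecIn O f →
      NatPartrecIn O fun a => Nat.rfind fun n => (fun m => m = 0) <$> f (Nat.pair a n)

/-- A partial function between `Primcodable` types is partial recursive in the oracle `O`. -/
def PartrecIn (O : ℕ →. ℕ) {α σ : Type} [Primcodable α] [Primcodable σ] (f : α →. σ) : Prop :=
  NatPartrecIn O fun n =>
    Part.bind (Part.ofOption (Encodable.decode (α := α) n)) fun a => (f a).map Encodable.encode

/-- A predicate is recursively enumerable in the oracle `O` if it is the domain of a partial
function recursive in `O`. -/
def RePredIn (O : ℕ →. ℕ) {α : Type} [Primcodable α] (p : α → Prop) : Prop :=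
  PartrecIn O fun a => Part.assert (p a) fun _ => Part.some ()

/-- The characteristic function (as an oracle `ℕ →. ℕ`) of a set `L` of elements of a
`Primcodable` type: on the code of an element of `L` it answers `1`, elsewhere `0`. -/
def charFun {α : Type} [Primcodable α] (L : Set α) : ℕ →. ℕ :=
  fun n => Part.some (if ∃ a ∈ L, Encodable.encode a = n then 1 else 0)

/-! ### Finitely generated groups, words and pattern codings -/

variable {G : Type} [Group G]

/-- The group element represented by a word over the generators `S`. -/
def wordEval {k : ℕ} (S : Fin k → G) (w : List (Fin k)) : G :=
  (w.map S).prod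

/-- `S : Fin k → G` is a finite symmetric generating family containing the identity. -/
def IsGenData {k : ℕ} (S : Fin k → G) : Prop :=
  (∃ i, S i = 1) ∧ (∀ i, ∃ j, S j = (S i)⁻¹) ∧ Subgroup.closure (Set.range S) = ⊤

/-- The word problem of `G` with respect to the generating family `S`. -/
def WP {k : ℕ} (S : Fin k → G) : Set (List (Fin k)) :=
  {w | wordEval S w = 1}

/-- A pattern coding over the alphabet `A`: a finite list of pairs (word, symbol). -/
abbrev PatternCoding (k : ℕ) (A : Type) : Type :=
  List (List (Fin k) × A)

/-- The subshift defined by a set `C` of pattern codings: configurations in which no translate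
of a coded pattern occurs. -/
def XC {k : ℕ} (S : Fin k → G) {A : Type} (C : Set (PatternCoding k A)) : Set (G → A) :=
  {x | ¬ ∃ (g : G) (c : PatternCoding k A), c ∈ C ∧ ∀ p ∈ c, x (g * wordEval S p.1) = p.2}

/-- A set is effectively closed if it is defined by a recursively enumerable set of
pattern codings. -/
def EffectivelyClosed {k : ℕ} (S : Fin k → G) {A : Type} [Primcodable A]
    (X : Set (G → A)) : Prop :=
  ∃ C : Set (PatternCoding k A), REPred (· ∈ C) ∧ X = XC S C

/-- A set is `G`-effectively closed if it is defined by a set of pattern codings which is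
recursively enumerable with oracle the word problem of `G`. -/
def GEffectivelyClosed {k : ℕ} (S : Fin k → G) {A : Type} [Primcodable A]
    (X : Set (G → A)) : Prop :=
  ∃ C : Set (PatternCoding k A), RePredIn (charFun (WP S)) (· ∈ C) ∧ X = XC S C

/-- A pattern coding is consistent if words representing the same group element receive the
same symbol. -/
def Consistent {k : ℕ} (S : Fin k → G) {A : Type} (c : PatternCoding k A) : Prop :=
  ∀ p ∈ c, ∀ q ∈ c, wordEval S p.1 = wordEval S q.1 → p.2 = q.2

/-! ### Subshifts, SFTs, sofic subshifts -/

/-- `X ⊆ A^G` is a subshift: closed (for the product of the discrete topology) and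
shift-invariant. -/
def IsSubshift {A : Type} (X : Set (G → A)) : Prop :=
  (letI : TopologicalSpace A := ⊥; IsClosed X) ∧
    ∀ x ∈ X, ∀ g : G, (fun h => x (g⁻¹ * h)) ∈ X

/-- A pattern with finite support over the alphabet `A`. -/
structure Pattern (G : Type) (A : Type) where
  supp : Finset G
  val : (g : G) → g ∈ supp → A

/-- The pattern `p` occurs in the configuration `x` at position `g`. -/
def PatternOccurs {A : Type} (p : Pattern G A) (x : G → A) (g : G) : Prop :=
  ∀ (h : G) (hh : h ∈ p.supp), x (g * h) = p.val h hh

/-- The subshift defined by a set of forbidden patterns. -/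
def XPat {A : Type} (Fs : Set (Pattern G A)) : Set (G → A) :=
  {x | ¬ ∃ (g : G) (p : Pattern G A), p ∈ Fs ∧ PatternOccurs p x g}

/-- A subshift of finite type: defined by a finite set of forbidden patterns. -/
def IsSFT {A : Type} (X : Set (G → A)) : Prop :=
  ∃ Fs : Set (Pattern G A), Fs.Finite ∧ X = XPat Fs

/-- A witness that `X` is sofic: an SFT `Y` over a finite alphabet `B` together with a factor
code (continuous shift-equivariant surjection) from `Y` onto `X`. -/
structure SoficVia (G : Type) [Group G] {A : Type} (X : Set (G → A)) : Type 1 where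
  B : Type
  finB : Fintype B
  Y : Set (G → B)
  sft : IsSFT Y
  subY : IsSubshift Y
  phi : (G → B) → (G → A)
  cont : letI : TopologicalSpace B := ⊥
         letI : TopologicalSpace A := ⊥
         ContinuousOn phi Y
  equiv : ∀ y ∈ Y, ∀ g : G, phi (fun h => y (g⁻¹ * h)) = fun h => phi y (g⁻¹ * h)
  image : phi '' Y = X

/-- A subshift is sofic if it is the image of an SFT under a factor code. -/
def IsSofic {A : Type} (X : Set (G → A)) : Prop :=
  Nonempty (SoficVia G X)

/-- A factor code from `X` onto `Y`: continuous (discrete product topologies),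
shift-equivariant and surjective. -/
def FactorCode {A B : Type} (X : Set (G → A)) (Y : Set (G → B))
    (φ : (G → A) → (G → B)) : Prop :=
  (letI : TopologicalSpace A := ⊥
   letI : TopologicalSpace B := ⊥
   ContinuousOn φ X) ∧
  (∀ x ∈ X, ∀ g : G, φ (fun h => x (g⁻¹ * h)) = fun h => φ x (g⁻¹ * h)) ∧
  φ '' X = Y

/-- Two subshifts are conjugate if there is a shift-equivariant homeomorphism between them. -/
def Conjugate {A B : Type} (X : Set (G → A)) (Y : Set (G → B)) : Prop :=
  ∃ (φ : (G → A) → (G → B)) (ψ : (G → B) → (G → A)),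
    FactorCode X Y φ ∧ FactorCode Y X ψ ∧
    (∀ x ∈ X, ψ (φ x) = x) ∧ (∀ y ∈ Y, φ (ψ y) = y)

/-- The one-or-less subshift: configurations with at most one occurrence of the symbol `1`
(represented by `true`). -/
def Xle1 (G : Type) : Set (G → Bool) :=
  {x | ∀ g h : G, x g = true → x h = true → g = h}

/-! ### `G`-machines -/

/-- A `G`-machine: finite set of states, finite tape alphabet `A` with a blank symbol, initial
state, accepting states, and a transition function moving with the generators `Fin k`. -/
structure GMachine (k : ℕ) (A : Type) : Type 1 where
  Q : Type
  finQ : Fintype Q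
  blank : A
  q0 : Q
  QF : Set Q
  delta : A × Q → A × Q × Fin k

/-- One step of a `G`-machine in the fixed head model: if `δ(x(1),q) = (a,q',s)` then the new
configuration is `σ_{s⁻¹} x̃` where `x̃` is `x` with the value at `1` replaced by `a`. -/
def GMachine.step {k : ℕ} {A : Type} (M : GMachine k A) (S : Fin k → G) :
    (G → A) × M.Q → (G → A) × M.Q :=
  fun xq =>
    let t := M.delta (xq.1 1, xq.2)
    let xt : G → A := Function.update xq.1 1 t.1
    (fun h => xt (S t.2.2 * h), t.2.1)

/-- The configuration which equals the pattern `p` on its support and `blank` elsewhere. -/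
def Pattern.config {A : Type} (p : Pattern G A) (blank : A) : G → A :=
  fun g => if h : g ∈ p.supp then p.val g h else blank

/-- The `G`-machine `M` accepts the pattern `p` if starting from the configuration `x^p` in the
initial state it eventually reaches an accepting state. -/
def GMachine.Accepts {k : ℕ} {A : Type} (M : GMachine k A) (S : Fin k → G)
    (p : Pattern G A) : Prop :=
  ∃ n : ℕ, ((M.step S)^[n] (p.config M.blank, M.q0)).2 ∈ M.QF

/-- A set of patterns is `G`-recursively enumerable if some `G`-machine accepts exactly its
elements. -/
def GRecEnum {k : ℕ} (S : Fin k → G) {A : Type} (L : Set (Pattern G A)) : Prop :=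
  ∃ M : GMachine k A, ∀ p : Pattern G A, M.Accepts S p ↔ p ∈ L

/-- The consistent pattern coding `c` defines the pattern `p`. -/
def Defines {k : ℕ} (S : Fin k → G) {A : Type} (c : PatternCoding k A)
    (p : Pattern G A) : Prop :=
  (∀ g : G, g ∈ p.supp ↔ ∃ q ∈ c, wordEval S q.1 = g) ∧
  ∀ q ∈ c, ∀ hg : wordEval S q.1 ∈ p.supp, p.val (wordEval S q.1) hg = q.2

/-- `p(C)`: the set of patterns defined by the consistent pattern codings of `C`. -/
def patternsOf {k : ℕ} (S : Fin k → G) {A : Type} (C : Set (PatternCoding k A)) :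
    Set (Pattern G A) :=
  {p | ∃ c ∈ C, Consistent S c ∧ Defines S c p}

/-- A set of patterns is closed by extensions if any pattern extending a pattern of the set
also belongs to the set. -/
def ClosedByExtensions {A : Type} (L : Set (Pattern G A)) : Prop :=
  ∀ (p₁ p₂ : Pattern G A) (hsub : p₁.supp ⊆ p₂.supp),
    (∀ (g : G) (hg : g ∈ p₁.supp), p₂.val g (hsub hg) = p₁.val g hg) →
    p₁ ∈ L → p₂ ∈ L

/-! ### Balls, ends, amenability -/

/-- The ball of radius `n` in the word metric given by `S`. -/
def ballS {k : ℕ} (S : Fin k → G) (n : ℕ) : Set G :=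
  {x | ∃ w : List (Fin k), w.length ≤ n ∧ wordEval S w = x}

/-- Adjacency in the Cayley graph restricted to the set `V`. -/
def Adj {k : ℕ} (S : Fin k → G) (V : Set G) (a b : G) : Prop :=
  a ∈ V ∧ b ∈ V ∧ ∃ i, a * S i = b

/-- Reachability inside `V` in the Cayley graph of `(G,S)`. -/
def Reach {k : ℕ} (S : Fin k → G) (V : Set G) (a b : G) : Prop :=
  Relation.ReflTransGen (Adj S V) a b

/-- `G` has at least two ends: for some `n`, the complement of the ball of radius `n` in the
Cayley graph has at least two infinite connected components. -/
def HasTwoOrMoreEnds {k : ℕ} (S : Fin k → G) : Prop :=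
  ∃ (n : ℕ) (x y : G), x ∉ ballS S n ∧ y ∉ ballS S n ∧
    {z | Reach S (ballS S n)ᶜ x z}.Infinite ∧
    {z | Reach S (ballS S n)ᶜ y z}.Infinite ∧
    ¬ Reach S (ballS S n)ᶜ x y

/-- The Følner condition: `G` is amenable. -/
def FolnerAmenable (G : Type) [Group G] : Prop :=
  ∀ (K : Finset G) (ε : ℝ), 0 < ε →
    ∃ F : Finset G, F.Nonempty ∧ ∀ k ∈ K,
      ((F \ F.image (fun x => x * k)).card : ℝ) < ε * F.card

/-! ### `G × ℤ`, presentations, hardness and the domino problems -/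

/-- Generators of `G × ℤ`: the generators of `G` paired with `0`, together with `(1,±1)`. -/
def prodGens {k : ℕ} (S : Fin k → G) : Fin (k + 2) → G × Multiplicative ℤ :=
  fun i =>
    if h : (i : ℕ) < k then (S ⟨i, h⟩, 1)
    else if (i : ℕ) = k then (1, Multiplicative.ofAdd 1)
    else (1, Multiplicative.ofAdd (-1))

/-- The element of the free group over the generator indices represented by a word. -/
def freeWord {k : ℕ} (w : List (Fin k)) : FreeGroup (Fin k) :=
  (w.map FreeGroup.of).prod

/-- `G` is recursively presented with respect to `S`: there is a recursively enumerable set of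
relators (words over the generators) whose normal closure in the free group over the
generator indices is the kernel of the evaluation map. -/
def RecursivelyPresented {k : ℕ} (S : Fin k → G) : Prop :=
  ∃ R : Set (List (Fin k)), REPred (· ∈ R) ∧
    MonoidHom.ker (FreeGroup.lift S) = Subgroup.normalClosure (freeWord '' R)

/-- `L` is hard for the class of predicates recursively enumerable in the oracle `O`
(equivalently, hard for the halting problem of machines with oracle `O`): every
such predicate many-one reduces to `L` via a computable function. -/
def OracleREHard {α : Type} [Primcodable α] (O : ℕ →. ℕ) (L : Set α) : Prop :=
  ∀ p : ℕ → Prop, RePredIn O p → ∃ f : ℕ → α, Computable f ∧ ∀ n, p n ↔ f n ∈ L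

/-- The domino problem of `(K,T)`: pairs `(N, F)` of an alphabet size and a finite list of
pattern codings over `ℕ` such that no configuration with symbols `< N` avoids `F`. -/
def DP {K : Type} [Group K] {m : ℕ} (T : Fin m → K) : Set (ℕ × List (PatternCoding m ℕ)) :=
  {q | ¬ ∃ x : K → ℕ, (∀ g, x g < q.1) ∧ x ∈ XC T {c | c ∈ q.2}}

/-- The origin constrained domino problem of `(K,T)`: triples `((N,a),F)` such that no
configuration with symbols `< N` and the symbol `a` at the origin avoids `F`. -/
def OCDP {K : Type} [Group K] {m : ℕ} (T : Fin m → K) :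
    Set ((ℕ × ℕ) × List (PatternCoding m ℕ)) :=
  {q | ¬ ∃ x : K → ℕ, (∀ g, x g < q.1.1) ∧ x 1 = q.1.2 ∧ x ∈ XC T {c | c ∈ q.2}}



theorem natPartrecIn_of_natPartrec {O : ℕ →. ℕ} {f : ℕ →. ℕ} (h : Nat.Partrec f) :
    NatPartrecIn O f := by
  induction h with
  | zero => exact .zero
  | succ => exact .succ
  | left => exact .left
  | right => exact .right
  | pair _ _ hf hg => exact .pair hf hg
  | comp _ _ hf hg => exact .comp hf hg
  | prec _ _ hf hg => exact .prec hf hg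
  | rfind _ hf => exact .rfind hf

theorem NatPartrecIn.of_eq'' {O f : ℕ →. ℕ} (h : NatPartrecIn O f) {g : ℕ →. ℕ}
    (H : ∀ n, f n = g n) : NatPartrecIn O g :=
  (funext H : f = g) ▸ h

theorem natPartrecIn_prim {O : ℕ →. ℕ} {f : ℕ → ℕ} (hf : Primrec f) : NatPartrecIn O ↑f :=
  natPartrecIn_of_natPartrec (Nat.Partrec.of_primrec (Primrec.nat_iff.1 hf))

theorem rePredIn_charFun {α β : Type} [Primcodable α] [Primcodable β] (L : Set β)
    (v : α → ℕ) (hv : Primrec v) (p : α → Prop)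
    (hp : ∀ a, p a ↔ 2 ≤ v a ∧ ∃ b ∈ L, Encodable.encode b = v a - 2) :
    RePredIn (charFun L) p := by
  set O := charFun L with hO
  set χ : ℕ → ℕ := fun n => if ∃ b ∈ L, Encodable.encode b = n then 1 else 0 with hχ
  have hOval : ∀ n, O n = Part.some (χ n) := fun n => rfl
  -- the oracle part `ans`
  set post : ℕ → ℕ := fun r => (2 - r.unpair.1) + (1 - r.unpair.2) with hpostdef
  set ans : ℕ →. ℕ :=
    fun m => (Nat.pair <$> (Part.some m : Part ℕ) <*> O (m - 2)) >>= (↑post : ℕ →. ℕ) with hans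
  have h1 : NatPartrecIn O fun n => O (n - 2) := by
    have hs : NatPartrecIn O ↑(fun n : ℕ => n - 2) :=
      natPartrecIn_prim (Primrec.nat_sub.comp Primrec.id (Primrec.const 2))
    exact (NatPartrecIn.comp .oracle hs).of_eq'' fun n => by
      simp [PFun.coe_val, Part.bind_some, Part.bind_eq_bind]
      exact Part.bind_some _ _
  have hid : NatPartrecIn O fun n => (Part.some n : Part ℕ) :=
    (natPartrecIn_prim Primrec.id).of_eq'' fun n => rfl
  have hpost : NatPartrecIn O (↑post : ℕ →. ℕ) :=
    natPartrecIn_prim <|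
      Primrec.nat_add.comp
        (Primrec.nat_sub.comp (Primrec.const 2) (Primrec.fst.comp Primrec.unpair))
        (Primrec.nat_sub.comp (Primrec.const 1) (Primrec.snd.comp Primrec.unpair))
  have hansIn : NatPartrecIn O ans := .comp hpost (.pair hid h1)
  have hansval : ∀ m, ans m = Part.some (post (Nat.pair m (χ (m - 2)))) := by
    intro m
    simp [hans, hOval, Seq.seq, Part.bind_some, PFun.coe_val, Part.bind_eq_bind]
    exact Part.bind_some _ _
  have hansL : NatPartrecIn O fun r => ans r.unpair.1 :=
    (NatPartrecIn.comp hansIn (natPartrecIn_prim (Primrec.fst.comp Primrec.unpair))).of_eq''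
      fun n => by simp [PFun.coe_val, Part.bind_some, Part.bind_eq_bind]; exact Part.bind_some _ _
  have hR : NatPartrecIn O fun a =>
      Nat.rfind fun n => (fun m => m = 0) <$> (fun r => ans r.unpair.1) (Nat.pair a n) :=
    .rfind hansL
  have hG1 : NatPartrecIn O fun n =>
      Part.bind (Part.ofOption (Encodable.decode (α := α) n)) fun a => Part.some (v a) := by
    have hv' : Computable v := Primrec.to_comp hv
    exact (natPartrecIn_of_natPartrec hv').of_eq'' fun n => by
      simp [Part.ofOption, PFun.coe_val, Encodable.encode_nat]
  refine (NatPartrecIn.comp hR hG1).of_eq'' fun n => Part.ext fun x => ?_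
  have hcond : ∀ a : α, post (Nat.pair (v a) (χ (v a - 2))) = 0 ↔ p a := by
    intro a
    rw [hp a]
    simp only [hpostdef, Nat.unpair_pair, Nat.add_eq_zero]
    constructor
    · rintro ⟨h2, h1'⟩
      refine ⟨by omega, ?_⟩
      by_contra hb
      simp only [hχ, if_neg hb] at h1'
      omega
    · rintro ⟨h2, hb⟩
      refine ⟨by omega, ?_⟩
      simp [hχ, if_pos hb]
  have hzero : (Encodable.encode () : ℕ) = 0 := rfl
  constructor
  · rintro hmem
    simp only [Part.bind_eq_bind, Part.mem_bind_iff, Part.mem_ofOption,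
      Part.mem_some_iff] at hmem ⊢
    obtain ⟨m, ⟨a, ha, rfl⟩, hx⟩ := hmem
    refine ⟨a, ha, ?_⟩
    replace hx := Nat.mem_rfind.1 hx
    simp only [Nat.unpair_pair, hansval, Part.map_eq_map, Part.map_some, Nat.mem_rfind,
      Part.mem_some_iff] at hx
    obtain ⟨hc, hmin⟩ := hx
    have hc' : post (Nat.pair (v a) (χ (v a - 2))) = 0 := by simpa using hc
    simp only [Part.mem_map_iff, Part.mem_assert_iff]
    refine ⟨(), ⟨(hcond a).1 hc', Part.mem_some _⟩, ?_⟩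
    rcases Nat.eq_zero_or_pos x with rfl | hxpos
    · exact hzero
    · have hfalse := hmin hxpos
      simp [hc'] at hfalse
  · rintro hmem
    simp only [Part.bind_eq_bind, Part.mem_bind_iff, Part.mem_ofOption, Part.mem_map_iff,
      Part.mem_assert_iff] at hmem ⊢
    obtain ⟨a, ha, ⟨u, ⟨hpa, _⟩, rfl⟩⟩ := hmem
    refine ⟨v a, ⟨a, ha, Part.mem_some _⟩, ?_⟩
    rw [show (Encodable.encode u : ℕ) = 0 from rfl]
    refine Nat.mem_rfind.2 ?_
    simp only [Nat.unpair_pair, hansval, Part.map_eq_map, Part.map_some, Nat.mem_rfind,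
      Part.mem_some_iff]
    refine ⟨by simp [hcond a, hpa], ?_⟩
    intro m hm
    exact absurd hm (Nat.not_lt_zero m)

theorem rePred_of_exists {α : Type} [Primcodable α] (P : α → ℕ → Bool) (hP : Computable₂ P)
    (p : α → Prop) (hp : ∀ a, p a ↔ ∃ n, P a n = true) : REPred p := by
  have h1 : Partrec fun a => Nat.rfindOpt fun n => (cond (P a n) (some ()) none : Option Unit) :=
    Partrec.rfindOpt (Computable.cond hP (Computable.const (some ())) (Computable.const none))
  refine h1.dom_re.of_eq fun a => ?_
  rw [Nat.rfindOpt_dom]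
  constructor
  · rintro ⟨n, u, hu⟩
    rw [hp a]
    refine ⟨n, ?_⟩
    cases h : P a n <;> simp [h] at hu ⊢
  · intro hpa
    obtain ⟨n, hn⟩ := (hp a).1 hpa
    exact ⟨n, (), by simp [hn]⟩


/-! ### Word evaluation lemmas -/

@[simp] theorem wordEval_nil {k : ℕ} (S : Fin k → G) : wordEval S [] = 1 := rfl

@[simp] theorem wordEval_cons {k : ℕ} (S : Fin k → G) (a : Fin k) (w : List (Fin k)) :
    wordEval S (a :: w) = S a * wordEval S w := by simp [wordEval]

theorem wordEval_hom {H : Type} [Group H] (φ : G →* H) {k : ℕ} (S : Fin k → G) :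
    ∀ w : List (Fin k), wordEval (fun i => φ (S i)) w = φ (wordEval S w)
  | [] => by simp
  | a :: w => by simp [wordEval_hom φ S w]

/-! ### The construction -/

def tkIdx (k : ℕ) : Fin (k + 2) := ⟨k, by omega⟩

def tnIdx (k : ℕ) : Fin (k + 2) := ⟨k + 1, by omega⟩

/-- The pattern coding forbidding the word `w` (flanked by blanks) in the `ℤ` direction. -/
def wCode {k : ℕ} (w : List (Fin k)) : PatternCoding (k + 2) (Option (Fin k)) :=
  ([tnIdx k], none) :: (List.replicate w.length (tkIdx k), none) ::
    (List.range w.length).map fun j => (List.replicate j (tkIdx k), w[j]?)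

/-- The set of coded forbidden patterns: all nonempty words of the word problem. -/
def theC {k : ℕ} (S : Fin k → G) : Set (PatternCoding (k + 2) (Option (Fin k))) :=
  {c | ∃ w, w ∈ WP S ∧ w ≠ [] ∧ wCode w = c}

/-- The projection of the generators of `G × ℤ` to `ℤ`. -/
def Tsnd {k : ℕ} (S : Fin k → G) : Fin (k + 2) → Multiplicative ℤ :=
  fun i => (prodGens S i).2

/-- The configuration over `ℤ` carrying the word `w` at positions `0, …, |w|-1`. -/
def xw {k : ℕ} (w : List (Fin k)) : Multiplicative ℤ → Option (Fin k) :=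
  fun g => if Multiplicative.toAdd g < 0 then none else w[(Multiplicative.toAdd g).toNat]?

theorem prodGens_tk {k : ℕ} (S : Fin k → G) :
    prodGens S (tkIdx k) = (1, Multiplicative.ofAdd (1 : ℤ)) := by
  simp [prodGens, tkIdx]

theorem prodGens_tn {k : ℕ} (S : Fin k → G) :
    prodGens S (tnIdx k) = (1, Multiplicative.ofAdd (-1 : ℤ)) := by
  simp [prodGens, tnIdx]

theorem snd_wordEval {k : ℕ} (S : Fin k → G) (u : List (Fin (k + 2))) :
    (wordEval (prodGens S) u).2 = wordEval (Tsnd S) u :=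
  (wordEval_hom (MonoidHom.snd G (Multiplicative ℤ)) (prodGens S) u).symm

theorem eval_rep {k : ℕ} (S : Fin k → G) (j : ℕ) :
    wordEval (Tsnd S) (List.replicate j (tkIdx k)) = Multiplicative.ofAdd (j : ℤ) := by
  induction j with
  | zero => simp
  | succ n ih =>
      rw [List.replicate_succ, wordEval_cons, ih]
      show (prodGens S (tkIdx k)).2 * _ = _
      rw [prodGens_tk]
      rw [← ofAdd_add]
      congr 1
      push_cast
      ring

theorem eval_tn {k : ℕ} (S : Fin k → G) :
    wordEval (Tsnd S) [tnIdx k] = Multiplicative.ofAdd (-1 : ℤ) := by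
  rw [show ([tnIdx k] : List (Fin (k+2))) = tnIdx k :: [] from rfl, wordEval_cons]
  show (prodGens S (tnIdx k)).2 * _ = _
  rw [prodGens_tn]
  simp

theorem fst_eval_rep {k : ℕ} (S : Fin k → G) (j : ℕ) :
    (wordEval (prodGens S) (List.replicate j (tkIdx k))).1 = 1 := by
  induction j with
  | zero => simp
  | succ n ih =>
      rw [List.replicate_succ, wordEval_cons]
      show (prodGens S (tkIdx k)).1 * _ = 1
      rw [prodGens_tk]
      simpa using ih

theorem fst_eval_tn {k : ℕ} (S : Fin k → G) :
    (wordEval (prodGens S) [tnIdx k]).1 = 1 := by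
  rw [show ([tnIdx k] : List (Fin (k+2))) = tnIdx k :: [] from rfl, wordEval_cons]
  show (prodGens S (tnIdx k)).1 * (wordEval (prodGens S) []).1 = 1
  rw [prodGens_tn]
  simp

theorem mem_wCode {k : ℕ} {w : List (Fin k)} {p : List (Fin (k + 2)) × Option (Fin k)} :
    p ∈ wCode w ↔
      p = ([tnIdx k], none) ∨ p = (List.replicate w.length (tkIdx k), none) ∨
        ∃ j < w.length, p = (List.replicate j (tkIdx k), w[j]?) := by
  simp only [wCode, List.mem_cons, List.mem_map, List.mem_range]
  constructor
  · rintro (h | h | ⟨j, hj, rfl⟩)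
    · exact Or.inl h
    · exact Or.inr (Or.inl h)
    · exact Or.inr (Or.inr ⟨j, hj, rfl⟩)
  · rintro (h | h | ⟨j, hj, rfl⟩)
    · exact Or.inl h
    · exact Or.inr (Or.inl h)
    · exact Or.inr (Or.inr ⟨j, hj, rfl⟩)

theorem eval_prodGens_wCode {k : ℕ} (S : Fin k → G) {w : List (Fin k)}
    {p : List (Fin (k + 2)) × Option (Fin k)} (hp : p ∈ wCode w) :
    wordEval (prodGens S) p.1 = (1, wordEval (Tsnd S) p.1) := by
  have h1 : (wordEval (prodGens S) p.1).1 = 1 := by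
    rcases mem_wCode.1 hp with rfl | rfl | ⟨j, hj, rfl⟩
    · exact fst_eval_tn S
    · exact fst_eval_rep S _
    · exact fst_eval_rep S _
  have h2 := snd_wordEval S p.1
  exact Prod.ext h1 h2

theorem occ_iff {k : ℕ} (S : Fin k → G) (x : Multiplicative ℤ → Option (Fin k))
    (g : Multiplicative ℤ) (w : List (Fin k)) :
    (∀ p ∈ wCode w, x (g * wordEval (Tsnd S) p.1) = p.2) ↔
      (x (g * Multiplicative.ofAdd (-1 : ℤ)) = none ∧
        x (g * Multiplicative.ofAdd (w.length : ℤ)) = none ∧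
        ∀ j < w.length, x (g * Multiplicative.ofAdd (j : ℤ)) = w[j]?) := by
  constructor
  · intro h
    refine ⟨?_, ?_, ?_⟩
    · have := h _ (mem_wCode.2 (Or.inl rfl))
      rwa [eval_tn] at this
    · have := h _ (mem_wCode.2 (Or.inr (Or.inl rfl)))
      rwa [eval_rep] at this
    · intro j hj
      have := h _ (mem_wCode.2 (Or.inr (Or.inr ⟨j, hj, rfl⟩)))
      rwa [eval_rep] at this
  · rintro ⟨h1, h2, h3⟩ p hp
    rcases mem_wCode.1 hp with rfl | rfl | ⟨j, hj, rfl⟩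
    · rw [show (([tnIdx k], none) : List (Fin (k+2)) × Option (Fin k)).1 = [tnIdx k] from rfl,
        eval_tn]
      exact h1
    · show x (g * wordEval (Tsnd S) (List.replicate w.length (tkIdx k))) = none
      rw [eval_rep]
      exact h2
    · show x (g * wordEval (Tsnd S) (List.replicate j (tkIdx k))) = w[j]?
      rw [eval_rep]
      exact h3 j hj

/-- The `ℤ`-projective subdynamics of the constructed subshift. -/
theorem pi_eq {k : ℕ} (S : Fin k → G) :
    {x : Multiplicative ℤ → Option (Fin k) |
        ∃ y ∈ XC (prodGens S) (theC S), ∀ n : Multiplicative ℤ, x n = y (1, n)} =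
      XC (Tsnd S) (theC S) := by
  ext x
  simp only [Set.mem_setOf_eq]
  constructor
  · rintro ⟨y, hy, hxy⟩
    intro hbad
    obtain ⟨g, c, hc, hocc⟩ := hbad
    obtain ⟨w, hwWP, hwne, rfl⟩ := hc
    refine hy ⟨((1 : G), g), wCode w, ⟨w, hwWP, hwne, rfl⟩, fun p hp => ?_⟩
    rw [eval_prodGens_wCode S hp]
    have hmul : ((1 : G), g) * ((1 : G), wordEval (Tsnd S) p.1)
        = ((1 : G), g * wordEval (Tsnd S) p.1) := by
      rw [Prod.mk_mul_mk, one_mul]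
    rw [hmul, ← hxy]
    exact hocc p hp
  · intro hx
    refine ⟨fun q => x q.2, ?_, fun n => rfl⟩
    rintro ⟨g, c, hc, hocc⟩
    refine hx ⟨g.2, c, hc, fun p hp => ?_⟩
    have := hocc p hp
    have h2 : (g * wordEval (prodGens S) p.1).2 = g.2 * wordEval (Tsnd S) p.1 := by
      rw [Prod.snd_mul, snd_wordEval]
    rw [← h2]
    exact this

theorem xw_ofAdd {k : ℕ} (w : List (Fin k)) (z : ℤ) :
    xw w (Multiplicative.ofAdd z) = if z < 0 then none else w[z.toNat]? := by
  simp [xw]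

theorem xw_notin {k : ℕ} (S : Fin k → G) {w : List (Fin k)} (hw : w ∈ WP S) (hne : w ≠ []) :
    xw w ∉ XC (Tsnd S) (theC S) := by
  intro hx
  refine hx ⟨1, wCode w, ⟨w, hw, hne, rfl⟩, (occ_iff S (xw w) 1 w).2 ⟨?_, ?_, ?_⟩⟩
  · rw [one_mul, xw_ofAdd]
    simp
  · rw [one_mul, xw_ofAdd, if_neg (by omega)]
    have : ((w.length : ℤ)).toNat = w.length := by omega
    rw [this]
    exact List.getElem?_eq_none_iff.2 le_rfl
  · intro j hj
    rw [one_mul, xw_ofAdd, if_neg (by omega)]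
    simp

theorem xw_mem_of {k : ℕ} (S : Fin k → G) {w : List (Fin k)} (hne : w ≠ [])
    (hx : xw w ∉ XC (Tsnd S) (theC S)) : w ∈ WP S := by
  obtain ⟨g, c, hc, hocc⟩ := not_not.1 hx
  obtain ⟨w', hw', hne', rfl⟩ := hc
  rw [occ_iff] at hocc
  obtain ⟨hA, hB, hC⟩ := hocc
  set ν : ℤ := Multiplicative.toAdd g with hν
  have hg : g = Multiplicative.ofAdd ν := rfl
  have hmul : ∀ z : ℤ, g * Multiplicative.ofAdd z = Multiplicative.ofAdd (ν + z) := by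
    intro z
    rw [hg, ← ofAdd_add]
  have hlen' : 0 < w'.length := List.length_pos_iff.2 hne'
  -- position ν is occupied
  have h0 := hC 0 hlen'
  rw [hmul, xw_ofAdd] at h0
  obtain ⟨a0, ha0⟩ : ∃ a, w'[0]? = some a := ⟨_, List.getElem?_eq_getElem hlen'⟩
  rw [ha0] at h0
  have hν0 : 0 ≤ ν := by
    by_contra hcon
    rw [if_pos (by omega)] at h0
    exact nomatch h0
  rw [if_neg (by omega)] at h0
  have hlt : (ν + 0).toNat < w.length := by
    by_contra hcon
    rw [List.getElem?_eq_none_iff.2 (by omega)] at h0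
    exact nomatch h0
  rw [hmul, xw_ofAdd] at hA
  have hνeq : ν = 0 := by
    by_contra hcon
    rw [if_neg (by omega)] at hA
    have := List.getElem?_eq_none_iff.1 hA
    omega
  rw [hmul, xw_ofAdd, if_neg (by omega)] at hB
  have hlenle : w.length ≤ (ν + (w'.length : ℤ)).toNat := List.getElem?_eq_none_iff.1 hB
  have hCj : ∀ j, j < w'.length → w[j]? = w'[j]? := by
    intro j hj
    have hcj := hC j hj
    rw [hmul, xw_ofAdd, if_neg (by omega)] at hcj
    rw [show ((ν + (j : ℤ)).toNat) = j by omega] at hcj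
    exact hcj
  have hlen2 : w'.length ≤ w.length := by
    by_contra hcon
    have hj : w.length < w'.length := by omega
    have hx2 := hCj w.length hj
    rw [List.getElem?_eq_none_iff.2 le_rfl, List.getElem?_eq_getElem hj] at hx2
    exact nomatch hx2
  have hlen1 : w.length ≤ w'.length := by omega
  have hww' : w = w' := by
    refine List.ext_getElem? fun n => ?_
    by_cases hn : n < w'.length
    · exact hCj n hn
    · rw [List.getElem?_eq_none_iff.2 (by omega), List.getElem?_eq_none_iff.2 (by omega)]
  exact hww' ▸ hw'



/-! ### Part 1 : the coding set is r.e. in the word problem -/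

theorem range_map_getD {α : Type} (d : α) :
    ∀ w : List α, ((List.range w.length).map fun j => (w[j]?).getD d) = w
  | [] => by simp
  | a :: w => by
      rw [List.length_cons, List.range_succ_eq_map, List.map_cons, List.map_map]
      congr 1
      have h := range_map_getD d w
      refine Eq.trans ?_ h
      simp only [Function.comp_def, List.getElem?_cons_succ]

def extractW {k : ℕ} (i0 : Fin k) (c : PatternCoding (k + 2) (Option (Fin k))) : List (Fin k) :=
  (List.range (c.length - 2)).map fun j => ((c.getD (j + 2) ([], none)).2).getD i0

theorem extractW_wCode {k : ℕ} (i0 : Fin k) (w : List (Fin k)) :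
    extractW i0 (wCode w) = w := by
  unfold extractW wCode
  have hlen : (([tnIdx k], (none : Option (Fin k))) ::
      (List.replicate w.length (tkIdx k), none) ::
      (List.range w.length).map (fun j => (List.replicate j (tkIdx k), w[j]?))).length - 2
      = w.length := by simp
  rw [hlen]
  refine Eq.trans (List.map_congr_left ?_) (range_map_getD i0 w)
  intro j hj
  rw [List.mem_range] at hj
  rw [List.getD_cons_succ, List.getD_cons_succ, List.getD_eq_getElem?_getD, List.getElem?_map,
    List.getElem?_range hj]
  simp


theorem wordEval_embed {k : ℕ} (S : Fin k → G) :
    ∀ w : List (Fin k), wordEval (prodGens S) (w.map (Fin.castAdd 2)) = (wordEval S w, 1)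
  | [] => rfl
  | a :: w => by
      rw [List.map_cons, wordEval_cons, wordEval_cons, wordEval_embed S w]
      have hp : prodGens S (Fin.castAdd 2 a) = (S a, 1) := by
        have hlt : ((Fin.castAdd 2 a : Fin (k + 2)) : ℕ) < k := a.isLt
        rw [prodGens, dif_pos hlt]
        congr 1
      rw [hp, Prod.mk_mul_mk, one_mul]

theorem mem_WP_embed {k : ℕ} (S : Fin k → G) (w : List (Fin k)) :
    w.map (Fin.castAdd 2) ∈ WP (prodGens S) ↔ w ∈ WP S := by
  show wordEval (prodGens S) _ = 1 ↔ wordEval S w = 1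
  rw [wordEval_embed S w]
  simp [Prod.mk_eq_one]

theorem theC_re {k : ℕ} (S : Fin k → G) (i0 : Fin k) :
    RePredIn (charFun (WP (prodGens S))) (· ∈ theC S) := by
  set v : PatternCoding (k + 2) (Option (Fin k)) → ℕ := fun c =>
    cond (decide (wCode (extractW i0 c) = c))
      (cond (decide (extractW i0 c = [])) 0
        (Encodable.encode ((extractW i0 c).map (Fin.castAdd 2)) + 2)) 0 with hv
  have hrepl : Primrec fun n : ℕ => List.replicate n (tkIdx k) := by
    have h : Primrec fun n : ℕ => (List.range n).map fun _ => tkIdx k :=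
      Primrec.list_map Primrec.list_range (Primrec₂.const (tkIdx k))
    exact h.of_eq fun n => by simp [List.map_const']
  have hwCode : Primrec (wCode : List (Fin k) → _) :=
    Primrec.list_cons.comp (Primrec.const ([tnIdx k], (none : Option (Fin k))))
      (Primrec.list_cons.comp
        (Primrec.pair (hrepl.comp Primrec.list_length) (Primrec.const none))
        (Primrec.list_map (Primrec.list_range.comp Primrec.list_length)
          ((Primrec.pair (hrepl.comp Primrec.snd)
            (Primrec.list_getElem?.comp Primrec.fst Primrec.snd)).to₂)))
  have hext : Primrec (extractW i0) :=
    Primrec.list_map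
      (Primrec.list_range.comp (Primrec.nat_sub.comp Primrec.list_length (Primrec.const 2)))
      ((Primrec.option_getD.comp
          (Primrec.snd.comp ((Primrec.list_getD (([], none))).comp Primrec.fst
            (Primrec.nat_add.comp Primrec.snd (Primrec.const 2))))
          (Primrec.const i0)).to₂)
  have hceq : Primrec fun c : PatternCoding (k + 2) (Option (Fin k)) =>
      decide (wCode (extractW i0 c) = c) :=
    (Primrec.eq.comp (hwCode.comp hext) Primrec.id).decide
  have hcnil : Primrec fun c : PatternCoding (k + 2) (Option (Fin k)) =>
      decide (extractW i0 c = []) :=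
    (Primrec.eq.comp hext (Primrec.const [])).decide
  have hvp : Primrec v :=
    Primrec.cond hceq
      (Primrec.cond hcnil (Primrec.const 0)
        (Primrec.nat_add.comp (Primrec.encode.comp
          (Primrec.list_map hext (((Primrec.dom_finite (Fin.castAdd (n := k) 2)).comp
            Primrec.snd).to₂)))
          (Primrec.const 2)))
      (Primrec.const 0)
  refine rePredIn_charFun (WP (prodGens S)) v hvp _ fun c => ?_
  constructor
  · rintro ⟨w, hwWP, hwne, rfl⟩
    have he := extractW_wCode i0 w
    have hvc : v (wCode w) = Encodable.encode (w.map (Fin.castAdd 2)) + 2 := by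
      rw [hv]
      simp [he, hwne]
    rw [hvc]
    exact ⟨by omega, w.map (Fin.castAdd 2), (mem_WP_embed S w).2 hwWP, by omega⟩
  · rintro ⟨h2, b, hbWP, hbe⟩
    by_cases h1 : wCode (extractW i0 c) = c
    · by_cases hnil : extractW i0 c = []
      · exfalso
        rw [hv] at h2
        simp [h1, hnil] at h2
      · have hvc : v c = Encodable.encode ((extractW i0 c).map (Fin.castAdd 2)) + 2 := by
          rw [hv]
          simp [h1, hnil]
        rw [hvc] at hbe
        have hb : b = (extractW i0 c).map (Fin.castAdd 2) :=
          Encodable.encode_injective (by omega)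
        subst hb
        exact ⟨extractW i0 c, (mem_WP_embed S _).1 hbWP, hnil, h1⟩
    · exfalso
      rw [hv] at h2
      simp [h1] at h2



/-! ### Part 3 : effectiveness of the projective subdynamics enumerates the word problem -/

theorem toAdd_wordEval {m : ℕ} (T : Fin m → Multiplicative ℤ) :
    ∀ u : List (Fin m),
      Multiplicative.toAdd (wordEval T u) = (u.map fun i => Multiplicative.toAdd (T i)).sum
  | [] => by simp
  | a :: u => by
      rw [wordEval_cons, List.map_cons, List.sum_cons, toAdd_mul, toAdd_wordEval T u]

theorem foldl_pair_spec {γ : Type} (t : γ → ℕ × ℕ) :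
    ∀ (u : List γ) (s : ℕ × ℕ),
      (((u.foldl (fun s i => (s.1 + (t i).1, s.2 + (t i).2)) s).1 : ℤ) -
        (u.foldl (fun s i => (s.1 + (t i).1, s.2 + (t i).2)) s).2) =
      ((s.1 : ℤ) - s.2) + (u.map fun i => ((t i).1 : ℤ) - (t i).2).sum
  | [], s => by simp
  | a :: u, s => by
      rw [List.foldl_cons, foldl_pair_spec t u _, List.map_cons, List.sum_cons]
      push_cast
      ring

def xwAt {k : ℕ} (w : List (Fin k)) (s : ℕ × ℕ) : Option (Fin k) :=
  if s.1 < s.2 then none else w[s.1 - s.2]?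

theorem xwAt_eq {k : ℕ} (w : List (Fin k)) (a b : ℕ) :
    xwAt w (a, b) = xw w (Multiplicative.ofAdd ((a : ℤ) - b)) := by
  by_cases h : a < b
  · rw [xw_ofAdd, if_pos (by omega : (a : ℤ) - b < 0)]
    simp [xwAt, h]
  · rw [xw_ofAdd, if_neg (by omega : ¬ ((a : ℤ) - b < 0))]
    show (if a < b then none else w[a - b]?) = _
    rw [if_neg h]
    congr 1
    omega

theorem foldl_and {γ : Type} (f : γ → Bool) :
    ∀ (l : List γ) (b : Bool), l.foldl (fun b x => b && f x) b = (b && l.all f)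
  | [], b => by simp
  | a :: l, b => by
      rw [List.foldl_cons, foldl_and f l, List.all_cons]
      cases b <;> cases f a <;> simp

theorem wp_re_of_effClosed {k m : ℕ} (S : Fin k → G) (T : Fin m → Multiplicative ℤ)
    (C' : Set (PatternCoding m (Option (Fin k)))) (hC' : REPred (· ∈ C'))
    (hZ : XC (Tsnd S) (theC S) = XC T C') : REPred (· ∈ WP S) := by
  obtain ⟨e, he⟩ := Nat.Partrec.Code.exists_code.1 hC'
  have hmem : ∀ c : PatternCoding m (Option (Fin k)),
      c ∈ C' ↔ ∃ s, (Nat.Partrec.Code.evaln s e (Encodable.encode c)).isSome = true := by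
    intro c
    have h1 : Nat.Partrec.Code.eval e (Encodable.encode c) =
        (Part.assert (c ∈ C') fun _ => Part.some ()).map Encodable.encode := by
      rw [he]
      simp [Encodable.encodek, Part.ofOption]
    constructor
    · intro hc
      have hx : (Encodable.encode () : ℕ) ∈ Nat.Partrec.Code.eval e (Encodable.encode c) := by
        rw [h1]
        exact Part.mem_map _ (Part.mem_assert_iff.2 ⟨hc, Part.mem_some _⟩)
      obtain ⟨s, hs⟩ := Nat.Partrec.Code.evaln_complete.1 hx
      exact ⟨s, Option.isSome_iff_exists.2 ⟨_, hs⟩⟩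
    · rintro ⟨s, hs⟩
      obtain ⟨x, hx⟩ := Option.isSome_iff_exists.1 hs
      have hx' := Nat.Partrec.Code.evaln_sound hx
      rw [h1] at hx'
      obtain ⟨u, hu, -⟩ := (Part.mem_map_iff _).1 hx'
      exact (Part.mem_assert_iff.1 hu).1
  set TZ : Fin m → ℕ × ℕ := fun i =>
    ((Multiplicative.toAdd (T i)).toNat, (-(Multiplicative.toAdd (T i))).toNat) with hTZ
  set evalP : List (Fin m) → ℕ × ℕ :=
    fun u => u.foldl (fun s i => (s.1 + (TZ i).1, s.2 + (TZ i).2)) (0, 0) with hevalP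
  have hevalPspec : ∀ u : List (Fin m),
      ((evalP u).1 : ℤ) - (evalP u).2 = Multiplicative.toAdd (wordEval T u) := by
    intro u
    rw [hevalP]
    rw [foldl_pair_spec TZ u (0, 0), toAdd_wordEval T u]
    have : (u.map fun i => ((TZ i).1 : ℤ) - (TZ i).2)
        = u.map fun i => Multiplicative.toAdd (T i) := by
      apply List.map_congr_left
      intro i _
      rw [hTZ]
      show ((Multiplicative.toAdd (T i)).toNat : ℤ) - ((-(Multiplicative.toAdd (T i))).toNat) = _
      omega
    rw [this]
    simp
  set chk : List (Fin k) × ((ℕ × ℕ) × List (List (Fin m) × Option (Fin k))) → Bool := fun p =>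
    p.2.2.foldl (fun bb q => bb &&
      decide (xwAt p.1 (p.2.1.1 + (evalP q.1).1, p.2.1.2 + (evalP q.1).2) = q.2)) true with hchk
  have hchkspec : ∀ (w : List (Fin k)) (a b : ℕ) (c : List (List (Fin m) × Option (Fin k))),
      chk (w, ((a, b), c)) = true ↔
        ∀ q ∈ c, xw w (Multiplicative.ofAdd ((a : ℤ) - b) * wordEval T q.1) = q.2 := by
    intro w a b c
    have harg : ∀ q : List (Fin m) × Option (Fin k),
        xwAt w (a + (evalP q.1).1, b + (evalP q.1).2)
          = xw w (Multiplicative.ofAdd ((a : ℤ) - b) * wordEval T q.1) := by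
      intro q
      rw [xwAt_eq]
      congr 1
      conv_rhs => rw [← ofAdd_toAdd (wordEval T q.1), ← ofAdd_add]
      congr 1
      have h1 := hevalPspec q.1
      push_cast
      omega
    rw [hchk]
    show (c.foldl (fun bb q => bb &&
        decide (xwAt w (a + (evalP q.1).1, b + (evalP q.1).2) = q.2)) true) = true ↔ _
    rw [foldl_and, Bool.true_and, List.all_eq_true]
    constructor
    · intro h q hq
      have := h q hq
      rw [decide_eq_true_eq] at this
      rw [← harg q]
      exact this
    · intro h q hq
      rw [decide_eq_true_eq, harg q]
      exact h q hq
  -- primitive recursiveness of `chk`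
  have hTZp : Primrec TZ := Primrec.dom_finite TZ
  have hevalPp : Primrec evalP := by
    have hh : Primrec₂ fun (_ : List (Fin m)) (p : (ℕ × ℕ) × Fin m) =>
        ((p.1.1 + (TZ p.2).1, p.1.2 + (TZ p.2).2) : ℕ × ℕ) :=
      ((Primrec.pair
        (Primrec.nat_add.comp (Primrec.fst.comp (Primrec.fst.comp Primrec.snd))
          (Primrec.fst.comp (hTZp.comp (Primrec.snd.comp Primrec.snd))))
        (Primrec.nat_add.comp (Primrec.snd.comp (Primrec.fst.comp Primrec.snd))
          (Primrec.snd.comp (hTZp.comp (Primrec.snd.comp Primrec.snd)))))).to₂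
    exact (Primrec.list_foldl Primrec.id (Primrec.const ((0, 0) : ℕ × ℕ)) hh).of_eq
      fun u => rfl
  have hxwAtp : Primrec fun p : List (Fin k) × (ℕ × ℕ) => xwAt p.1 p.2 := by
    have h := Primrec.ite
      (Primrec.nat_lt.comp (Primrec.fst.comp Primrec.snd) (Primrec.snd.comp Primrec.snd))
      (Primrec.const (none : Option (Fin k)))
      (Primrec.list_getElem?.comp Primrec.fst
        (Primrec.nat_sub.comp (Primrec.fst.comp Primrec.snd) (Primrec.snd.comp Primrec.snd)))
    exact h.of_eq fun p => rfl
  have hchkp : Primrec chk := by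
    have hh : Primrec₂ fun (p : List (Fin k) × ((ℕ × ℕ) × List (List (Fin m) × Option (Fin k))))
        (bq : Bool × (List (Fin m) × Option (Fin k))) =>
        (bq.1 && decide (xwAt p.1
          (p.2.1.1 + (evalP bq.2.1).1, p.2.1.2 + (evalP bq.2.1).2) = bq.2.2)) := by
      have hdec : Primrec fun x : (List (Fin k) × ((ℕ × ℕ) × List (List (Fin m) × Option (Fin k))))
          × (Bool × (List (Fin m) × Option (Fin k))) =>
          decide (xwAt x.1.1
            (x.1.2.1.1 + (evalP x.2.2.1).1, x.1.2.1.2 + (evalP x.2.2.1).2) = x.2.2.2) :=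
        (Primrec.eq.comp
          (hxwAtp.comp (Primrec.pair (Primrec.fst.comp Primrec.fst)
            (Primrec.pair
              (Primrec.nat_add.comp
                (Primrec.fst.comp (Primrec.fst.comp (Primrec.snd.comp Primrec.fst)))
                (Primrec.fst.comp (hevalPp.comp
                  (Primrec.fst.comp (Primrec.snd.comp Primrec.snd)))))
              (Primrec.nat_add.comp
                (Primrec.snd.comp (Primrec.fst.comp (Primrec.snd.comp Primrec.fst)))
                (Primrec.snd.comp (hevalPp.comp
                  (Primrec.fst.comp (Primrec.snd.comp Primrec.snd))))))))
          (Primrec.snd.comp (Primrec.snd.comp Primrec.snd))).decide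
      exact ((Primrec.cond (Primrec.fst.comp Primrec.snd) hdec
        (Primrec.const false)).to₂).of_eq fun p bq => by cases bq.1 <;> simp
    exact (Primrec.list_foldl (Primrec.snd.comp Primrec.snd) (Primrec.const true) hh).of_eq
      fun p => rfl
  -- the search predicate
  set P : List (Fin k) → ℕ → Bool := fun w n =>
    decide (w = []) ||
      (Option.casesOn
        (Encodable.decode (α := ℕ × (ℕ × ℕ) × List (List (Fin m) × Option (Fin k))) n)
        false
        (fun t => (Nat.Partrec.Code.evaln t.1 e (Encodable.encode t.2.2)).isSome
          && chk (w, t.2))) with hP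
  have hPp : Primrec₂ P := by
    have hnil : Primrec fun x : List (Fin k) × ℕ => decide (x.1 = []) :=
      (Primrec.eq.comp Primrec.fst (Primrec.const [])).decide
    have hg : Primrec₂ fun (x : List (Fin k) × ℕ)
        (t : ℕ × (ℕ × ℕ) × List (List (Fin m) × Option (Fin k))) =>
        ((Nat.Partrec.Code.evaln t.1 e (Encodable.encode t.2.2)).isSome && chk (x.1, t.2)) := by
      have h1 : Primrec fun y : (List (Fin k) × ℕ)
          × (ℕ × (ℕ × ℕ) × List (List (Fin m) × Option (Fin k))) =>
          (Nat.Partrec.Code.evaln y.2.1 e (Encodable.encode y.2.2.2)).isSome :=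
        Primrec.option_isSome.comp
          (Nat.Partrec.Code.primrec_evaln.comp
            (Primrec.pair
              (Primrec.pair (Primrec.fst.comp Primrec.snd)
                (Primrec.const e))
              (Primrec.encode.comp (Primrec.snd.comp (Primrec.snd.comp Primrec.snd)))))
      have h2 : Primrec fun y : (List (Fin k) × ℕ)
          × (ℕ × (ℕ × ℕ) × List (List (Fin m) × Option (Fin k))) =>
          chk (y.1.1, y.2.2) :=
        hchkp.comp (Primrec.pair (Primrec.fst.comp Primrec.fst)
          (Primrec.snd.comp Primrec.snd))
      exact ((Primrec.cond h1 h2 (Primrec.const false)).to₂).of_eq fun x t => by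
        cases h : (Nat.Partrec.Code.evaln t.1 e (Encodable.encode t.2.2)).isSome <;> simp [h]
    have hcases : Primrec fun x : List (Fin k) × ℕ =>
        (Option.casesOn
          (Encodable.decode (α := ℕ × (ℕ × ℕ) × List (List (Fin m) × Option (Fin k))) x.2)
          false
          (fun t => (Nat.Partrec.Code.evaln t.1 e (Encodable.encode t.2.2)).isSome
            && chk (x.1, t.2)) : Bool) :=
      Primrec.option_casesOn (Primrec.decode.comp Primrec.snd) (Primrec.const false) hg
    exact ((Primrec.cond hnil (Primrec.const true) hcases).to₂).of_eq fun w n => by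
      rw [hP]
      cases h : decide (w = []) <;> simp [h]
  -- correctness of the search
  refine rePred_of_exists P hPp.to_comp _ fun w => ?_
  constructor
  · intro hwWP
    by_cases hwe : w = []
    · exact ⟨0, by simp [hP, hwe]⟩
    · have hx := xw_notin S hwWP hwe
      rw [hZ] at hx
      obtain ⟨g, c, hc, hocc⟩ := not_not.1 hx
      set a : ℕ := (Multiplicative.toAdd g).toNat with ha
      set b : ℕ := (-(Multiplicative.toAdd g)).toNat with hb
      have hg : Multiplicative.ofAdd ((a : ℤ) - b) = g := by
        have h1 : ((a : ℤ) - b) = Multiplicative.toAdd g := by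
          rw [ha, hb]; omega
        rw [h1, ofAdd_toAdd]
      have hchkt : chk (w, ((a, b), c)) = true := by
        rw [hchkspec]
        intro q hq
        rw [hg]
        exact hocc q hq
      obtain ⟨s, hs⟩ := (hmem c).1 hc
      refine ⟨Encodable.encode ((s, ((a, b), c)) :
        ℕ × (ℕ × ℕ) × List (List (Fin m) × Option (Fin k))), ?_⟩
      rw [hP]
      simp only [Encodable.encodek]
      rw [hs, hchkt]
      simp
  · rintro ⟨n, hn⟩
    rw [hP] at hn
    rcases Bool.or_eq_true_iff.1 hn with hnil | hrest
    · have : w = [] := of_decide_eq_true hnil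
      subst this
      show wordEval S [] = 1
      simp
    · rcases hdec : (Encodable.decode (α := ℕ × (ℕ × ℕ) ×
        List (List (Fin m) × Option (Fin k))) n) with _ | t
      · rw [hdec] at hrest
        exact absurd hrest (by simp)
      · rw [hdec] at hrest
        obtain ⟨h1, h2⟩ : _ ∧ _ := by simpa using hrest
        have hcC' : t.2.2 ∈ C' := (hmem t.2.2).2 ⟨t.1, h1⟩
        have hocc := (hchkspec w t.2.1.1 t.2.1.2 t.2.2).1 h2
        have hnot : xw w ∉ XC (Tsnd S) (theC S) := by
          rw [hZ]
          intro hmm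
          exact hmm ⟨Multiplicative.ofAdd ((t.2.1.1 : ℤ) - t.2.1.2), t.2.2, hcC', hocc⟩
        by_cases hwe : w = []
        · subst hwe
          show wordEval S [] = 1
          simp
        · exact xw_mem_of S hwe hnot

/-- If the word problem of `G` is not recursively enumerable, then there is a
`(G×ℤ)`-effectively closed subshift whose `ℤ`-projective subdynamics is not effectively
closed. -/
theorem projective_subdynamics_not_effective
    {G : Type} [Group G] {k : ℕ} (S : Fin k → G) (hS : IsGenData S)
    (hWP : ¬ REPred (· ∈ WP S)) :
    ∃ (A : Type) (fA : Fintype A) (pA : Primcodable A)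
      (X : Set ((G × Multiplicative ℤ) → A)),
      @GEffectivelyClosed (G × Multiplicative ℤ) _ (k + 2) (prodGens S) A pA X ∧
      ∀ (m : ℕ) (T : Fin m → Multiplicative ℤ), IsGenData T →
        ¬ @EffectivelyClosed (Multiplicative ℤ) _ m T A pA
            {x : Multiplicative ℤ → A | ∃ y ∈ X, ∀ n : Multiplicative ℤ, x n = y (1, n)} := by
  obtain ⟨⟨i0, hi0⟩, hinv, hclos⟩ := hS
  refine ⟨Option (Fin k), inferInstance, inferInstance, XC (prodGens S) (theC S),
    ⟨theC S, theC_re S i0, rfl⟩, ?_⟩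
  intro m T hT hE
  obtain ⟨C', hC're, hXCeq⟩ := hE
  have hZ : XC (Tsnd S) (theC S) = XC T C' := by
    rw [← pi_eq S]
    exact hXCeq
  exact hWP (wp_re_of_effClosed S T C' hC're hZ)

end SDG
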